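/- For a connected d-weighted graph, the foliage equivalence relation is invariant under the qudit local complementation operations *_a w (adding a·ω_{wj}·ω_{wk} to each off-diagonal entry (j,k)) and ∘_b v (multiplying all weights incident to v by a nonzero scalar b), for any a ∈ Z_d and nonzero b ∈ Z_d with d prime. -/

import Mathlib

namespace Foliage

variable {d : ℕ} {V : Type*}

def wGraph (ω : V → V → ZMod d) : SimpleGraph V where
  Adj v w := v ≠ w ∧ (ω v w ≠ 0 ∨ ω w v ≠ 0)
  symm := ⟨fun v w h => ⟨h.1.symm, h.2.symm⟩⟩
  loopless := ⟨fun v h => h.1 rfl⟩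

/-- The foliage relation (weight products coincide for all other pairs). -/
def WRel (ω : V → V → ZMod d) (v w : V) : Prop :=
  ∀ u₁ u₂ : V, u₁ ≠ v → u₁ ≠ w → u₂ ≠ v → u₂ ≠ w →
    ω v u₁ * ω w u₂ = ω v u₂ * ω w u₁

/-- The qudit local complementation `*_a w`. -/
def starOp [DecidableEq V] (ω : V → V → ZMod d) (a : ZMod d) (w : V) :
    V → V → ZMod d :=
  fun j k => if j = k then 0 else ω j k + a * ω w j * ω w k

/-- The qudit local scaling `∘_b v`. -/
def circOp [DecidableEq V] (ω : V → V → ZMod d) (b : ZMod d) (v : V) :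
    V → V → ZMod d :=
  fun j k => (if j = v then b else 1) * ω j k * (if k = v then b else 1)

lemma star_symm [DecidableEq V] (ω : V → V → ZMod d)
    (hsymm : ∀ v w, ω v w = ω w v) (a : ZMod d) (x : V) :
    ∀ j k, starOp ω a x j k = starOp ω a x k j := by
  intro j k
  unfold starOp
  by_cases h : j = k
  · subst h; simp
  · rw [if_neg h, if_neg (Ne.symm h), hsymm j k]; ring

lemma star_diag [DecidableEq V] (ω : V → V → ZMod d) (a : ZMod d) (x : V) :
    ∀ j, starOp ω a x j j = 0 := by
  intro j; simp [starOp]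

lemma star_row [DecidableEq V] (ω : V → V → ZMod d)
    (hdiag : ∀ v, ω v v = 0) (a : ZMod d) (x : V) :
    ∀ j, starOp ω a x x j = ω x j := by
  intro j
  unfold starOp
  by_cases h : x = j
  · subst h; rw [if_pos rfl, hdiag]
  · rw [if_neg h, hdiag]; ring

lemma star_star [DecidableEq V] (ω : V → V → ZMod d)
    (hdiag : ∀ v, ω v v = 0) (a : ZMod d) (x : V) :
    starOp (starOp ω a x) (-a) x = ω := by
  funext j k
  show (if j = k then 0 else starOp ω a x j k + (-a) * starOp ω a x x j * starOp ω a x x k)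
      = ω j k
  rw [star_row ω hdiag a x j, star_row ω hdiag a x k]
  by_cases h : j = k
  · subst h; rw [if_pos rfl, hdiag]
  · rw [if_neg h]
    unfold starOp
    rw [if_neg h]
    ring

lemma star_forward [DecidableEq V] (ω : V → V → ZMod d)
    (hsymm : ∀ v w, ω v w = ω w v) (hdiag : ∀ v, ω v v = 0)
    (a : ZMod d) (x v w : V) (h : WRel ω v w) : WRel (starOp ω a x) v w := by
  intro u₁ u₂ h1v h1w h2v h2w
  simp only [starOp, if_neg (Ne.symm h1v), if_neg (Ne.symm h1w),
    if_neg (Ne.symm h2v), if_neg (Ne.symm h2w)]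
  by_cases hxv : x = v
  · subst hxv
    rw [hdiag]
    linear_combination h u₁ u₂ h1v h1w h2v h2w
  · by_cases hxw : x = w
    · subst hxw
      rw [hdiag]
      linear_combination h u₁ u₂ h1v h1w h2v h2w
    · have hx1 := h u₁ x h1v h1w hxv hxw
      have hx2 := h u₂ x h2v h2w hxv hxw
      rw [hsymm x v, hsymm x w]
      linear_combination h u₁ u₂ h1v h1w h2v h2w
        + a * ω x u₂ * hx1 - a * ω x u₁ * hx2

theorem qudit_lc_preserves_foliage_rel [Fintype V] [DecidableEq V]
    (hd : Nat.Prime d) (ω : V → V → ZMod d)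
    (hsymm : ∀ v w, ω v w = ω w v) (hdiag : ∀ v, ω v v = 0)
    (hconn : (wGraph ω).Connected)
    (a : ZMod d) (b : ZMod d) (hb : b ≠ 0) (x : V) :
    (∀ v w : V, WRel ω v w ↔ WRel (starOp ω a x) v w) ∧
    (∀ v w : V, WRel ω v w ↔ WRel (circOp ω b x) v w) := by
  haveI : Fact (Nat.Prime d) := ⟨hd⟩
  constructor
  · intro v w
    constructor
    · exact star_forward ω hsymm hdiag a x v w
    · intro h'
      have h2 := star_forward (starOp ω a x) (star_symm ω hsymm a x)
        (star_diag ω a x) (-a) x v w h'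
      rwa [star_star ω hdiag a x] at h2
  · intro v w
    constructor
    · intro h u₁ u₂ h1v h1w h2v h2w
      simp only [circOp]
      linear_combination ((if v = x then b else 1) * (if w = x then b else 1) *
        (if u₁ = x then b else 1) * (if u₂ = x then b else 1)) *
        h u₁ u₂ h1v h1w h2v h2w
    · intro h u₁ u₂ h1v h1w h2v h2w
      have H := h u₁ u₂ h1v h1w h2v h2w
      simp only [circOp] at H
      have hc : ((if v = x then b else 1) * (if w = x then b else 1) *
          (if u₁ = x then b else 1) * (if u₂ = x then b else 1) : ZMod d) ≠ 0 := by
        repeat' apply mul_ne_zero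
        all_goals split_ifs <;> simp [hb]
      refine mul_left_cancel₀ hc ?_
      linear_combination H

end Foliage
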